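/- (Summed feasibility bound, proof of Theorem 1) For every k ≥ 1: Σ_{i=1}^{k} ‖Ax^{i+1} − b‖² ≤ (2/β)·(d(λ*) − d(λ¹) + Σ_{i=1}^{k} η_i). -/

import Mathlib

open RealInnerProductSpace Filter Topology

lemma convex_grad_ineq {n : ℕ} {f : EuclideanSpace ℝ (Fin n) → ℝ}
    {f' : EuclideanSpace ℝ (Fin n) → EuclideanSpace ℝ (Fin n)}
    (hf : ConvexOn ℝ Set.univ f) (hf' : ∀ x, HasGradientAt f (f' x) x)
    (x y : EuclideanSpace ℝ (Fin n)) :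
    f x + ⟪f' x, y - x⟫ ≤ f y := by
  set v := y - x with hv
  have hc : ∀ t : ℝ, HasDerivAt (fun t : ℝ => x + t • v) v t := by
    intro t
    simpa using ((hasDerivAt_id t).smul_const v).const_add x
  have hfd := (hf' x).hasFDerivAt
  have hcomp : HasDerivAt (fun t : ℝ => f (x + t • v)) ⟪f' x, v⟫ 0 := by
    have hfd' : HasFDerivAt f ((InnerProductSpace.toDual ℝ _) (f' x)) (x + (0:ℝ) • v) := by
      simpa using hfd
    have := hfd'.comp_hasDerivAt (x := 0) (hc 0)
    simpa [InnerProductSpace.toDual_apply_apply, Function.comp_def] using this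
  have hslope : Tendsto (slope (fun t : ℝ => f (x + t • v)) 0) (𝓝[>] 0) (𝓝 ⟪f' x, v⟫) :=
    (hasDerivAt_iff_tendsto_slope.mp hcomp).mono_left
      (nhdsWithin_mono _ fun t ht => ne_of_gt ht)
  have hbound : ∀ᶠ t in 𝓝[>] (0:ℝ), slope (fun t : ℝ => f (x + t • v)) 0 t ≤ f y - f x := by
    filter_upwards [Ioc_mem_nhdsGT_of_mem (by norm_num : (0:ℝ) ∈ Set.Ico 0 1)] with t ht
    have h1 : f (x + t • v) ≤ (1 - t) * f x + t * f y := by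
      have := hf.2 (Set.mem_univ x) (Set.mem_univ y) (by linarith [ht.2] : (0:ℝ) ≤ 1 - t)
        (le_of_lt ht.1) (by ring)
      have heq : (1 - t) • x + t • y = x + t • v := by
        simp [hv, smul_sub, sub_smul]; module
      rwa [heq] at this
    rw [slope_def_field]
    have : (f (x + t • v) - f (x + (0:ℝ) • v)) / (t - 0) ≤ f y - f x := by
      rw [div_le_iff₀ (by linarith [ht.1])]
      simp only [zero_smul, add_zero, sub_zero]
      nlinarith [ht.1]
    simpa [div_sub_div_same] using this
  have := le_of_tendsto hslope hbound
  have h0 : f (x + (0:ℝ) • v) = f x := by simp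
  linarith [this]


/-- **Summed feasibility bound (proof of Theorem 1).**
For every `k ≥ 1`:
`Σ_{i=1}^{k} ‖Ax^{i+1} − b‖² ≤ (2/β)(d(λ*) − d(λ¹) + Σ_{i=1}^{k} η_i)`. -/
theorem ial_summed_feasibility
    {n m : ℕ}
    (A : EuclideanSpace ℝ (Fin n) →L[ℝ] EuclideanSpace ℝ (Fin m))
    (b : EuclideanSpace ℝ (Fin m))
    (f g : EuclideanSpace ℝ (Fin n) → ℝ)
    (f' : EuclideanSpace ℝ (Fin n) → EuclideanSpace ℝ (Fin n))
    (hf : ConvexOn ℝ Set.univ f)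
    (hf' : ∀ x, HasGradientAt f (f' x) x)
    (hg : ConvexOn ℝ Set.univ g)
    (β : ℝ) (hβ : 0 < β)
    (L : EuclideanSpace ℝ (Fin n) → EuclideanSpace ℝ (Fin m) → ℝ)
    (hL : ∀ x lam, L x lam
        = f x + ⟪lam, A x - b⟫ + β / 2 * ‖A x - b‖ ^ 2 + g x)
    (d : EuclideanSpace ℝ (Fin m) → ℝ)
    (hd : ∀ lam, IsLeast (Set.range fun x => L x lam) (d lam))
    (x : ℕ → EuclideanSpace ℝ (Fin n))
    (lam : ℕ → EuclideanSpace ℝ (Fin m))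
    (η : ℕ → ℝ)
    (hη : ∀ k, 1 ≤ k → 0 ≤ η k)
    (happrox : ∀ k, 1 ≤ k → ∀ y,
        ⟪f' (x (k + 1)) + A.adjoint (lam k + β • (A (x (k + 1)) - b)), x (k + 1) - y⟫
          + g (x (k + 1)) - g y ≤ η k)
    (hlam : ∀ k, 1 ≤ k → lam (k + 1) = lam k + β • (A (x (k + 1)) - b))
    (lamstar : EuclideanSpace ℝ (Fin m))
    (hstar : ∀ μ, d μ ≤ d lamstar)
    :
    ∀ k, 1 ≤ k →
      ∑ i ∈ Finset.Icc 1 k, ‖A (x (i + 1)) - b‖ ^ 2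
        ≤ 2 / β * (d lamstar - d (lam 1) + ∑ i ∈ Finset.Icc 1 k, η i) := by
  -- Per-step dual improvement
  have key : ∀ i, 1 ≤ i →
      β / 2 * ‖A (x (i + 1)) - b‖ ^ 2 ≤ d (lam (i + 1)) - d (lam i) + η i := by
    intro i hi
    set xp := x (i + 1) with hxp
    set r := A xp - b with hr
    have hlp : lam (i + 1) = lam i + β • r := hlam i hi
    -- d (lam i) ≤ L xp (lam i)
    have hdle : d (lam i) ≤ L xp (lam i) := (hd (lam i)).2 ⟨xp, rfl⟩
    -- lower bound on L y (lam (i+1)) for all y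
    have hlow : ∀ y, f xp + g xp + ⟪lam (i + 1), r⟫ - η i ≤ L y (lam (i + 1)) := by
      intro y
      have hgrad := convex_grad_ineq hf hf' xp y
      have happ := happrox i hi y
      rw [← hr, ← hlp] at happ
      have h1 : ⟪f' xp + A.adjoint (lam (i + 1)), xp - y⟫
          = ⟪f' xp, xp - y⟫ + ⟪lam (i + 1), A xp - A y⟫ := by
        rw [inner_add_left, A.adjoint_inner_left, map_sub]
      have h2 : ⟪lam (i + 1), A xp - A y⟫ + ⟪lam (i + 1), A y - b⟫ = ⟪lam (i + 1), r⟫ := by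
        rw [← inner_add_right, show A xp - A y + (A y - b) = r by rw [hr]; abel]
      have h3 : ⟪f' xp, y - xp⟫ = -⟪f' xp, xp - y⟫ := by
        rw [show y - xp = -(xp - y) by abel, inner_neg_right]
      have hnn : 0 ≤ β / 2 * ‖A y - b‖ ^ 2 := by positivity
      rw [hL y (lam (i + 1))]
      rw [h1] at happ
      rw [h3] at hgrad
      linarith [h2]
    -- hence d (lam (i+1)) ≥ that bound
    have hdge : f xp + g xp + ⟪lam (i + 1), r⟫ - η i ≤ d (lam (i + 1)) := by
      obtain ⟨xb, hxb⟩ := (hd (lam (i + 1))).1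
      rw [← hxb]; exact hlow xb
    have hinner : ⟪lam (i + 1), r⟫ = ⟪lam i, r⟫ + β * ‖r‖ ^ 2 := by
      rw [hlp, inner_add_left, real_inner_smul_left, real_inner_self_eq_norm_sq]
    rw [hL xp (lam i), ← hr] at hdle
    rw [hinner] at hdge
    linarith
  -- Summed claim with d (lam (k+1))
  have hsum : ∀ k, 1 ≤ k →
      ∑ i ∈ Finset.Icc 1 k, β / 2 * ‖A (x (i + 1)) - b‖ ^ 2
        ≤ d (lam (k + 1)) - d (lam 1) + ∑ i ∈ Finset.Icc 1 k, η i := by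
    intro k hk
    induction k, hk using Nat.le_induction with
    | base => simpa using key 1 le_rfl
    | succ k hk ih =>
      rw [Finset.sum_Icc_succ_top (by omega), Finset.sum_Icc_succ_top (by omega)]
      have := key (k + 1) (by omega)
      linarith
  intro k hk
  have h := hsum k hk
  have h2 := hstar (lam (k + 1))
  have hβ' : 0 < 2 / β := by positivity
  calc ∑ i ∈ Finset.Icc 1 k, ‖A (x (i + 1)) - b‖ ^ 2
      = 2 / β * ∑ i ∈ Finset.Icc 1 k, β / 2 * ‖A (x (i + 1)) - b‖ ^ 2 := by
        rw [Finset.mul_sum]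
        refine Finset.sum_congr rfl fun i _ => ?_
        field_simp
    _ ≤ 2 / β * (d lamstar - d (lam 1) + ∑ i ∈ Finset.Icc 1 k, η i) := by
        apply mul_le_mul_of_nonneg_left _ (le_of_lt hβ')
        linarith
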